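/- Fix m ≥ 3 and q ≥ 1. For t ∈ [0, m·q], define F(η) = ∫_{S^{q-1}} (Σ_j η_j x_j²)^{m/2} dx as a function of η = (η_1, ..., η_q) with each η_j ≥ 0. Then for any two indices i ≠ j and fixed c ≥ 0, the function s ↦ F(η with η_i = s, η_j = c - s) is convex on [0, c] (restricted to where both entries lie in the allowed range), because its second derivative equals (m/2)(m/2 - 1) ∫_{S^{q-1}} (Σ_j η_j x_j²)^{(m-4)/2} (x_i² - x_j²)² dx ≥ 0. -/

import Mathlib

open MeasureTheory Real Set Metric

section General
variable {α : Type*} [MeasurableSpace α]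

lemma key_convex_deriv (p : ℝ) (hp : (3:ℝ)/2 ≤ p)
    (μ : Measure α) [IsFiniteMeasure μ]
    (B d u : α → ℝ) (hB : Measurable B) (hd : Measurable d)
    (c K : ℝ) (hc : 0 ≤ c) (hK : 0 ≤ K)
    (h1 : ∀ᵐ x ∂μ, ∀ s ∈ Icc (0:ℝ) c, 0 ≤ B x + s * d x)
    (h2 : ∀ᵐ x ∂μ, ∀ s ∈ Icc (0:ℝ) c, B x + s * d x ≤ K)
    (h4 : ∀ᵐ x ∂μ, 0 ≤ u x ∧ u x ≤ 1 ∧ d x ^ 2 ≤ u x ^ 2 ∧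
        ∀ s ∈ Icc (0:ℝ) c, min s (c - s) * u x ≤ B x + s * d x) :
    ConvexOn ℝ (Icc (0:ℝ) c) (fun s => ∫ x, (B x + s * d x) ^ p ∂μ) ∧
    ∀ s ∈ Ioo (0:ℝ) c,
      deriv (deriv (fun s : ℝ => ∫ x, (B x + s * d x) ^ p ∂μ)) s
        = p * (p - 1) * ∫ x, (B x + s * d x) ^ (p - 2) * d x ^ 2 ∂μ := by
  have hp1 : (1:ℝ) ≤ p := by linarith
  have hp0 : (0:ℝ) ≤ p := by linarith
  have hp10 : (0:ℝ) ≤ p - 1 := by linarith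
  -- measurability
  have hr : ∀ e : ℝ, Measurable (fun r : ℝ => r ^ e) := by intro e; fun_prop
  have hmeas : ∀ (s : ℝ) (e : ℝ), AEStronglyMeasurable (fun x => (B x + s * d x) ^ e) μ := by
    intro s e
    exact ((hr e).comp (hB.add (hd.const_mul s))).aestronglyMeasurable
  have hmeasG : ∀ (s e k : ℝ),
      AEStronglyMeasurable (fun x => d x * k * (B x + s * d x) ^ e) μ := by
    intro s e k
    exact ((hd.mul_const k).mul ((hr e).comp (hB.add (hd.const_mul s)))).aestronglyMeasurable
  -- integrability of F s
  have hint : ∀ s ∈ Icc (0:ℝ) c, Integrable (fun x => (B x + s * d x) ^ p) μ := by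
    intro s hs
    refine Integrable.mono' (integrable_const (K ^ p)) (hmeas s p) ?_
    filter_upwards [h1, h2] with x h1x h2x
    rw [Real.norm_eq_abs, abs_of_nonneg (Real.rpow_nonneg (h1x s hs) p)]
    exact Real.rpow_le_rpow (h1x s hs) (h2x s hs) hp0
  -- convexity
  have hconv : ConvexOn ℝ (Icc (0:ℝ) c) (fun s => ∫ x, (B x + s * d x) ^ p ∂μ) := by
    refine ⟨convex_Icc _ _, fun s₁ hs₁ s₂ hs₂ a b ha hb hab => ?_⟩
    have hmem : a • s₁ + b • s₂ ∈ Icc (0:ℝ) c :=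
      (convex_Icc (0:ℝ) c) hs₁ hs₂ ha hb hab
    have hptwise : ∀ᵐ x ∂μ, (B x + (a • s₁ + b • s₂) * d x) ^ p
        ≤ a • (B x + s₁ * d x) ^ p + b • (B x + s₂ * d x) ^ p := by
      filter_upwards [h1] with x h1x
      have hlin : ∀ s : ℝ, (AffineMap.lineMap (B x) (B x + d x) : ℝ →ᵃ[ℝ] ℝ) s
          = B x + s * d x := by
        intro s
        simp [AffineMap.lineMap_apply, smul_eq_mul]
        ring
      have hcvx : ConvexOn ℝ (Icc (0:ℝ) c) (fun s => (B x + s * d x) ^ p) := by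
        have hA := (convexOn_rpow hp1).comp_affineMap
          (AffineMap.lineMap (B x) (B x + d x) : ℝ →ᵃ[ℝ] ℝ)
        have heq : ((fun r : ℝ => r ^ p) ∘ (AffineMap.lineMap (B x) (B x + d x) : ℝ →ᵃ[ℝ] ℝ))
            = fun s : ℝ => (B x + s * d x) ^ p := by
          funext s
          simp only [Function.comp_apply, hlin s]
        rw [heq] at hA
        refine hA.subset (fun s hs => ?_) (convex_Icc _ _)
        simp only [mem_preimage, hlin s, mem_Ici]
        exact h1x s hs
      have := hcvx.2 hs₁ hs₂ ha hb hab
      simpa [smul_eq_mul] using this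
    calc ∫ x, (B x + (a • s₁ + b • s₂) * d x) ^ p ∂μ
        ≤ ∫ x, (a • (B x + s₁ * d x) ^ p + b • (B x + s₂ * d x) ^ p) ∂μ := by
          refine integral_mono_ae (hint _ hmem)
            (((hint s₁ hs₁).smul a).add ((hint s₂ hs₂).smul b)) hptwise
      _ = a • ∫ x, (B x + s₁ * d x) ^ p ∂μ + b • ∫ x, (B x + s₂ * d x) ^ p ∂μ := by
          simp only [smul_eq_mul]
          rw [integral_add (((hint s₁ hs₁).const_mul a)) (((hint s₂ hs₂).const_mul b)),
            integral_const_mul, integral_const_mul]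
  refine ⟨hconv, ?_⟩
  have habs : ∀ᵐ x ∂μ, |d x| ≤ 1 := by
    filter_upwards [h4] with x hx
    obtain ⟨hu0, hu1, hdu, -⟩ := hx
    nlinarith [sq_abs (d x), abs_nonneg (d x)]
  -- first derivative
  have hderiv1 : ∀ s₀ ∈ Ioo (0:ℝ) c,
      Integrable (fun x => d x * p * (B x + s₀ * d x) ^ (p - 1)) μ ∧
      HasDerivAt (fun s => ∫ x, (B x + s * d x) ^ p ∂μ)
        (∫ x, d x * p * (B x + s₀ * d x) ^ (p - 1) ∂μ) s₀ := by
    intro s₀ hs₀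
    have hε : 0 < min s₀ (c - s₀) := lt_min hs₀.1 (by linarith [hs₀.2])
    have hball : ball s₀ (min s₀ (c - s₀)) ⊆ Icc 0 c := by
      intro s hs
      rw [mem_ball, Real.dist_eq, abs_lt] at hs
      constructor
      · linarith [min_le_left s₀ (c - s₀), hs.1]
      · linarith [min_le_right s₀ (c - s₀), hs.2]
    refine hasDerivAt_integral_of_dominated_loc_of_deriv_le
      (F' := fun s x => d x * p * (B x + s * d x) ^ (p - 1)) (ball_mem_nhds s₀ hε)
      (Filter.Eventually.of_forall fun s => hmeas s p)
      (hint s₀ ⟨hs₀.1.le, hs₀.2.le⟩) (hmeasG s₀ (p - 1) p)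
      ?_ (integrable_const (p * K ^ (p - 1))) ?_
    · filter_upwards [h1, h2, habs] with x h1x h2x hax s hs
      have hsI := hball hs
      have hz0 : (0:ℝ) ≤ B x + s * d x := h1x s hsI
      have h3 : (B x + s * d x) ^ (p - 1) ≤ K ^ (p - 1) :=
        Real.rpow_le_rpow hz0 (h2x s hsI) hp10
      have h5 : (0:ℝ) ≤ (B x + s * d x) ^ (p - 1) := Real.rpow_nonneg hz0 _
      rw [Real.norm_eq_abs, abs_mul, abs_mul, abs_of_nonneg hp0, abs_of_nonneg h5]
      nlinarith [mul_nonneg hp0 (sub_nonneg.2 h3),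
        mul_nonneg (mul_nonneg hp0 h5) (sub_nonneg.2 hax), abs_nonneg (d x)]
    · refine Filter.Eventually.of_forall fun x s hs => ?_
      exact ((hasDerivAt_mul_const (d x)).const_add (B x)).rpow_const (Or.inr hp1)
  -- second derivative
  have hderiv2 : ∀ s₀ ∈ Ioo (0:ℝ) c,
      HasDerivAt (fun s => ∫ x, d x * p * (B x + s * d x) ^ (p - 1) ∂μ)
        (∫ x, d x * p * (d x * (p - 1) * (B x + s₀ * d x) ^ (p - 2)) ∂μ) s₀ := by
    intro s₀ hs₀
    set ε := min s₀ (c - s₀) / 2 with hεdef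
    have hε : 0 < ε := by
      have := lt_min hs₀.1 (by linarith [hs₀.2] : (0:ℝ) < c - s₀)
      positivity
    have hball : ∀ s ∈ ball s₀ ε, s ∈ Icc (0:ℝ) c ∧ ε ≤ min s (c - s) := by
      intro s hs
      rw [mem_ball, Real.dist_eq, abs_lt] at hs
      have h₁ := min_le_left s₀ (c - s₀)
      have h₂ := min_le_right s₀ (c - s₀)
      refine ⟨⟨by linarith, by linarith⟩, le_min (by linarith) (by linarith)⟩
    set M : ℝ := max (K ^ (p - 2)) (ε ^ (p - 2)) with hM
    have hM0 : 0 ≤ M := le_trans (Real.rpow_nonneg hK _) (le_max_left _ _)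
    refine (hasDerivAt_integral_of_dominated_loc_of_deriv_le
      (F' := fun s x => d x * p * (d x * (p - 1) * (B x + s * d x) ^ (p - 2))) (ball_mem_nhds s₀ hε)
      (Filter.Eventually.of_forall fun s => hmeasG s (p - 1) p)
      ((hderiv1 s₀ hs₀).1)
      (((hd.mul_const p).mul ((hd.mul_const (p - 1)).mul
        ((hr (p - 2)).comp (hB.add (hd.const_mul s₀))))).aestronglyMeasurable)
      ?_ (integrable_const (p * (p - 1) * M)) ?_).2
    · -- bound on second derivative
      filter_upwards [h1, h2, h4] with x h1x h2x h4x s hs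
      obtain ⟨hu0, hu1, hdu, hlow⟩ := h4x
      obtain ⟨hsI, hεmin⟩ := hball s hs
      have hz0 : (0:ℝ) ≤ B x + s * d x := h1x s hsI
      have hZ0 : (0:ℝ) ≤ (B x + s * d x) ^ (p - 2) := Real.rpow_nonneg hz0 _
      have habs2 : |d x * p * (d x * (p - 1) * (B x + s * d x) ^ (p - 2))|
          = p * (p - 1) * (d x ^ 2 * (B x + s * d x) ^ (p - 2)) := by
        rw [show d x * p * (d x * (p - 1) * (B x + s * d x) ^ (p - 2))
            = p * (p - 1) * (d x ^ 2 * (B x + s * d x) ^ (p - 2)) by ring]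
        exact abs_of_nonneg (by positivity)
      rw [Real.norm_eq_abs, habs2]
      have hkey : d x ^ 2 * (B x + s * d x) ^ (p - 2) ≤ M := by
        rcases eq_or_lt_of_le hu0 with hu | hu
        · have hd20 : d x ^ 2 = 0 := le_antisymm (by nlinarith) (sq_nonneg _)
          rw [hd20, zero_mul]
          exact hM0
        · have hεu : 0 < ε * u x := mul_pos hε hu
          have hlow2 : ε * u x ≤ B x + s * d x :=
            le_trans (mul_le_mul_of_nonneg_right hεmin hu0) (hlow s hsI)
          by_cases hp2 : 0 ≤ p - 2
          · have hZK : (B x + s * d x) ^ (p - 2) ≤ K ^ (p - 2) :=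
              Real.rpow_le_rpow hz0 (h2x s hsI) hp2
            have hd1 : d x ^ 2 ≤ 1 := by nlinarith
            calc d x ^ 2 * (B x + s * d x) ^ (p - 2) ≤ 1 * (K ^ (p - 2)) :=
                  mul_le_mul hd1 hZK hZ0 zero_le_one
              _ = K ^ (p - 2) := one_mul _
              _ ≤ M := le_max_left _ _
          · have hZle : (B x + s * d x) ^ (p - 2) ≤ (ε * u x) ^ (p - 2) :=
              Real.rpow_le_rpow_of_nonpos hεu hlow2 (by linarith)
            calc d x ^ 2 * (B x + s * d x) ^ (p - 2)
                ≤ u x ^ 2 * ((ε * u x) ^ (p - 2)) :=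
                  mul_le_mul hdu hZle hZ0 (sq_nonneg _)
              _ = ε ^ (p - 2) * (u x ^ ((2:ℕ):ℝ) * u x ^ (p - 2)) := by
                  rw [Real.mul_rpow hε.le hu0, Real.rpow_natCast]
                  ring
              _ = ε ^ (p - 2) * u x ^ (((2:ℕ):ℝ) + (p - 2)) := by
                  rw [← Real.rpow_add hu]
              _ = ε ^ (p - 2) * u x ^ p := by norm_num
              _ ≤ ε ^ (p - 2) * 1 :=
                  mul_le_mul_of_nonneg_left (Real.rpow_le_one hu0 hu1 hp0)
                    (Real.rpow_nonneg hε.le _)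
              _ = ε ^ (p - 2) := mul_one _
              _ ≤ M := le_max_right _ _
      nlinarith [mul_nonneg (mul_nonneg hp0 hp10) (sub_nonneg.2 hkey)]
    · -- pointwise second derivative
      filter_upwards [h4] with x h4x s hs
      obtain ⟨hu0, hu1, hdu, hlow⟩ := h4x
      obtain ⟨hsI, hεmin⟩ := hball s hs
      by_cases hdx : d x = 0
      · simp only [hdx, zero_mul, mul_zero]
        exact hasDerivAt_const _ _
      · have hu : 0 < u x := by
          rcases eq_or_lt_of_le hu0 with hu | hu
          · exfalso
            apply hdx
            have : d x ^ 2 = 0 := le_antisymm (by nlinarith) (sq_nonneg _)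
            exact pow_eq_zero_iff two_ne_zero |>.mp this
          · exact hu
        have hpos : 0 < B x + s * d x :=
          lt_of_lt_of_le (mul_pos (lt_of_lt_of_le hε hεmin) hu)
            ((hlow s hsI))
        have h6 := (((hasDerivAt_mul_const (d x)).const_add (B x)).rpow_const
          (p := p - 1) (Or.inl hpos.ne')).const_mul (d x * p)
        have h7 : p - 1 - 1 = p - 2 := by ring
        rw [h7] at h6
        exact h6
  -- assemble
  intro s₀ hs₀
  have hev : deriv (fun s => ∫ x, (B x + s * d x) ^ p ∂μ)
      =ᶠ[nhds s₀] fun s => ∫ x, d x * p * (B x + s * d x) ^ (p - 1) ∂μ := by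
    filter_upwards [isOpen_Ioo.mem_nhds hs₀] with s hs
    exact ((hderiv1 s hs).2).deriv
  rw [hev.deriv_eq, (hderiv2 s₀ hs₀).deriv]
  rw [show (fun x => d x * p * (d x * (p - 1) * (B x + s₀ * d x) ^ (p - 2)))
      = fun x => (p * (p - 1)) * ((B x + s₀ * d x) ^ (p - 2) * d x ^ 2) from
    funext fun x => by ring, integral_const_mul]

end General

section Main

lemma sum_update_eq (q : ℕ) (η : Fin q → ℝ) (i j : Fin q) (hij : i ≠ j) (c s : ℝ)
    (x : EuclideanSpace ℝ (Fin q)) :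
    ∑ t, Function.update (Function.update η i s) j (c - s) t * x t ^ 2
      = (∑ t, Function.update (Function.update η i 0) j c t * x t ^ 2)
        + s * (x i ^ 2 - x j ^ 2) := by
  have h : ∀ t, Function.update (Function.update η i s) j (c - s) t * x t ^ 2
      = Function.update (Function.update η i 0) j c t * x t ^ 2
        + s * (((if t = i then (1:ℝ) else 0) - (if t = j then 1 else 0)) * x t ^ 2) := by
    intro t
    rcases eq_or_ne t j with rfl | htj
    · simp [Function.update_apply, Ne.symm hij]
      ring
    · rcases eq_or_ne t i with rfl | hti
      · simp [Function.update_apply, htj]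
      · simp [Function.update_apply, hti, htj]
  simp only [h]
  rw [Finset.sum_add_distrib, ← Finset.mul_sum]
  congr 1
  simp [sub_mul, Finset.sum_sub_distrib, ite_mul, one_mul, zero_mul,
    Finset.sum_ite_eq, Finset.sum_ite_eq']

/-- For `m ≥ 3`, `η_j ≥ 0`, indices `i ≠ j` and `c ≥ 0`, the function
`s ↦ F(η with η_i = s, η_j = c - s)`, where
`F(η) = ∫_{S^{q-1}} (Σ_t η_t x_t²)^{m/2} dx`, is convex on `[0, c]`, its second
derivative being `(m/2)(m/2 - 1) ∫ (Σ_t η_t x_t²)^{(m-4)/2} (x_i² - x_j²)² dx ≥ 0`. -/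
theorem stmt_4 (m q : ℕ) (hm : 3 ≤ m) (hq : 1 ≤ q)
    (μ : Measure (EuclideanSpace ℝ (Fin q))) [IsFiniteMeasure μ]
    (hinv : ∀ g : EuclideanSpace ℝ (Fin q) ≃ₗᵢ[ℝ] EuclideanSpace ℝ (Fin q), μ.map g = μ)
    (hsphere : μ (Metric.sphere (0 : EuclideanSpace ℝ (Fin q)) 1)ᶜ = 0)
    (η : Fin q → ℝ) (hη : ∀ t, 0 ≤ η t) (i j : Fin q) (hij : i ≠ j) (c : ℝ) (hc : 0 ≤ c) :
    ConvexOn ℝ (Set.Icc 0 c)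
      (fun s : ℝ => ∫ x, (∑ t, Function.update (Function.update η i s) j (c - s) t
          * (x t) ^ 2) ^ ((m : ℝ) / 2) ∂μ) ∧
    (∀ s ∈ Set.Ioo (0 : ℝ) c,
      deriv (deriv (fun s : ℝ => ∫ x, (∑ t, Function.update (Function.update η i s) j (c - s) t
          * (x t) ^ 2) ^ ((m : ℝ) / 2) ∂μ)) s
        = ((m : ℝ) / 2) * ((m : ℝ) / 2 - 1) *
            ∫ x, (∑ t, Function.update (Function.update η i s) j (c - s) t * (x t) ^ 2)
                ^ (((m : ℝ) - 4) / 2) * ((x i) ^ 2 - (x j) ^ 2) ^ 2 ∂μ) := by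
  classical
  have hm3 : (3:ℝ) ≤ (m:ℝ) := by exact_mod_cast hm
  have hp : (3:ℝ)/2 ≤ (m:ℝ)/2 := by linarith
  set K : ℝ := (∑ t, η t) + c with hKdef
  have hsum_nonneg : 0 ≤ ∑ t, η t := Finset.sum_nonneg fun t _ => hη t
  have hK : 0 ≤ K := by positivity
  -- measurability of coordinates
  have hcoord : ∀ t : Fin q, Measurable fun x : EuclideanSpace ℝ (Fin q) => x t := by
    intro t
    fun_prop
  have hBmeas : Measurable fun x : EuclideanSpace ℝ (Fin q) =>
      ∑ t, Function.update (Function.update η i 0) j c t * x t ^ 2 := by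
    apply Finset.measurable_sum
    intro t _
    exact ((hcoord t).pow_const 2).const_mul _
  have hdmeas : Measurable fun x : EuclideanSpace ℝ (Fin q) => x i ^ 2 - x j ^ 2 :=
    ((hcoord i).pow_const 2).sub ((hcoord j).pow_const 2)
  -- a.e. facts from the sphere
  have haeS : ∀ᵐ x ∂μ, ∑ t, x t ^ 2 = 1 := by
    have h0 : ∀ᵐ x ∂μ, x ∈ Metric.sphere (0 : EuclideanSpace ℝ (Fin q)) 1 := by
      rw [ae_iff]
      convert hsphere using 2
      rfl
    filter_upwards [h0] with x hx
    have hnorm : ‖x‖ = 1 := by simpa using hx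
    have h1 := EuclideanSpace.norm_eq x
    rw [hnorm] at h1
    have h2 : ∑ t, ‖x t‖ ^ 2 = 1 := Real.sqrt_eq_one.mp h1.symm
    simpa [Real.norm_eq_abs, sq_abs] using h2
  -- coefficient bounds
  have hcoeff : ∀ s ∈ Icc (0:ℝ) c, ∀ t,
      0 ≤ Function.update (Function.update η i s) j (c - s) t ∧
      Function.update (Function.update η i s) j (c - s) t ≤ K := by
    intro s hs t
    rcases eq_or_ne t j with rfl | htj
    · simp only [Function.update_self]
      exact ⟨by linarith [hs.2], by linarith [hs.1]⟩
    · rw [Function.update_of_ne htj]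
      rcases eq_or_ne t i with rfl | hti
      · simp only [Function.update_self]
        exact ⟨hs.1, by linarith [hs.2]⟩
      · rw [Function.update_of_ne hti]
        refine ⟨hη t, ?_⟩
        have := Finset.single_le_sum (f := η) (fun t _ => hη t) (Finset.mem_univ t)
        linarith
  -- the three a.e. hypotheses
  have h1 : ∀ᵐ x ∂μ, ∀ s ∈ Icc (0:ℝ) c,
      0 ≤ (∑ t, Function.update (Function.update η i 0) j c t * x t ^ 2)
        + s * (x i ^ 2 - x j ^ 2) := by
    refine Filter.Eventually.of_forall fun x s hs => ?_
    rw [← sum_update_eq q η i j hij c s x]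
    exact Finset.sum_nonneg fun t _ =>
      mul_nonneg (hcoeff s hs t).1 (sq_nonneg _)
  have h2 : ∀ᵐ x ∂μ, ∀ s ∈ Icc (0:ℝ) c,
      (∑ t, Function.update (Function.update η i 0) j c t * x t ^ 2)
        + s * (x i ^ 2 - x j ^ 2) ≤ K := by
    filter_upwards [haeS] with x hx s hs
    rw [← sum_update_eq q η i j hij c s x]
    calc ∑ t, Function.update (Function.update η i s) j (c - s) t * x t ^ 2
        ≤ ∑ t, K * x t ^ 2 :=
          Finset.sum_le_sum fun t _ =>
            mul_le_mul_of_nonneg_right (hcoeff s hs t).2 (sq_nonneg _)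
      _ = K * ∑ t, x t ^ 2 := by rw [Finset.mul_sum]
      _ = K := by rw [hx, mul_one]
  have h4 : ∀ᵐ x ∂μ, 0 ≤ x i ^ 2 + x j ^ 2 ∧ x i ^ 2 + x j ^ 2 ≤ 1 ∧
      (x i ^ 2 - x j ^ 2) ^ 2 ≤ (x i ^ 2 + x j ^ 2) ^ 2 ∧
      ∀ s ∈ Icc (0:ℝ) c, min s (c - s) * (x i ^ 2 + x j ^ 2) ≤
        (∑ t, Function.update (Function.update η i 0) j c t * x t ^ 2)
          + s * (x i ^ 2 - x j ^ 2) := by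
    filter_upwards [haeS] with x hx
    have hu1 : x i ^ 2 + x j ^ 2 ≤ 1 := by
      have hsub := Finset.sum_le_sum_of_subset_of_nonneg
        (Finset.subset_univ ({i, j} : Finset (Fin q)))
        (fun t _ _ => sq_nonneg (x t))
      rw [Finset.sum_pair hij] at hsub
      linarith [hsub.trans_eq hx]
    have hd2u2 : (x i ^ 2 - x j ^ 2) ^ 2 ≤ (x i ^ 2 + x j ^ 2) ^ 2 := by
      nlinarith [sq_nonneg (x i), sq_nonneg (x j),
        mul_nonneg (sq_nonneg (x i)) (sq_nonneg (x j))]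
    refine ⟨by positivity, hu1, hd2u2, ?_⟩
    intro s hs
    rw [← sum_update_eq q η i j hij c s x]
    have hpair : s * x i ^ 2 + (c - s) * x j ^ 2
        ≤ ∑ t, Function.update (Function.update η i s) j (c - s) t * x t ^ 2 := by
      have hsub := Finset.sum_le_sum_of_subset_of_nonneg
        (Finset.subset_univ ({i, j} : Finset (Fin q)))
        (fun t _ _ => mul_nonneg (hcoeff s hs t).1 (sq_nonneg (x t)))
      rw [Finset.sum_pair hij, Function.update_of_ne hij, Function.update_self,
        Function.update_self] at hsub
      exact hsub
    have e1 := mul_le_mul_of_nonneg_right (min_le_left s (c - s)) (sq_nonneg (x i))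
    have e2 := mul_le_mul_of_nonneg_right (min_le_right s (c - s)) (sq_nonneg (x j))
    nlinarith [e1, e2, hpair]
  have main := key_convex_deriv ((m:ℝ)/2) hp μ
    (fun x => ∑ t, Function.update (Function.update η i 0) j c t * x t ^ 2)
    (fun x => x i ^ 2 - x j ^ 2) (fun x => x i ^ 2 + x j ^ 2)
    hBmeas hdmeas c K hc hK h1 h2 h4
  have hfe : (fun s : ℝ => ∫ x, (∑ t, Function.update (Function.update η i s) j (c - s) t
        * (x t) ^ 2) ^ ((m : ℝ) / 2) ∂μ)
      = fun s : ℝ => ∫ x, ((∑ t, Function.update (Function.update η i 0) j c t * x t ^ 2)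
        + s * (x i ^ 2 - x j ^ 2)) ^ ((m : ℝ) / 2) ∂μ := by
    funext s
    congr 1
    funext x
    rw [sum_update_eq q η i j hij c s x]
  constructor
  · rw [hfe]
    exact main.1
  · intro s hs
    rw [hfe, main.2 s hs]
    congr 1
    congr 1
    funext x
    rw [sum_update_eq q η i j hij c s x,
      (show ((m:ℝ) - 4)/2 = (m:ℝ)/2 - 2 by ring)]

end Main
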